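/- arXiv:2501.11559 — 2 statements merged into one kernel-verified Lean document; each statement's English description precedes it below -/
import Mathlib

section
/- In the affine Weyl group $\breve{W}$ of type $A_n^{(1)}$, with $\omega: W \to \breve{W}$ the homomorphism from the affine Weyl group $W$ of type $A_{n-1}^{(1)}$ given by $\omega(s_i) = s_i$ ($1 \leq i \leq n-1$) and $\omega(s_0) = s_n s_0 s_n$, the image of the translation element satisfies $\omega(t_{\alpha_i^\vee}) = t_{\breve{\alpha}_i^\vee}$ for each $i \in \{1, \ldots, n-1\}$. -/
/- STATEMENT 15: With ω : W → W̆ the homomorphism from the affine Weyl group of type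
   A_{n-1}^{(1)} to that of type A_n^{(1)} given by ω(sᵢ) = sᵢ (1 ≤ i ≤ n-1),
   ω(s₀) = sₙ s₀ sₙ, the translation elements satisfy ω(t_{αᵢ∨}) = t_{ᾰᵢ∨} for
   i = 1, …, n-1.  (We write n = m + 1, m ≥ 2.)

   Translations are realized by words: t_{θ∨} = s₀ s_θ with
   s_θ = s₁⋯s_{k-1} s_k s_{k-1}⋯s₁ the reflection in the highest root of the finite part
   (rank k), t_{α₁∨} = w t_{θ∨} w⁻¹ with w = s₂s₃⋯s_k (since w(θ∨) = α₁∨), and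
   t_{α_{i+1}∨} = (sᵢ s_{i+1}) t_{αᵢ∨} (sᵢ s_{i+1})⁻¹. -/

def affA (k : ℕ) : CoxeterMatrix (Fin (k + 1)) where
  M := Matrix.of fun i j : Fin (k + 1) =>
    if i = j then 1
    else if ((i : ℕ) + 1) % (k + 1) = (j : ℕ) ∨ ((j : ℕ) + 1) % (k + 1) = (i : ℕ) then 3
    else 2
  isSymm := by unfold Matrix.IsSymm; ext i j; simp [Matrix.transpose_apply]; aesop
  diagonal := by simp
  off_diagonal := by aesop

/-- The simple reflection `s_j` (index taken mod `k+1`). -/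
def snat (k : ℕ) (j : ℕ) : (affA k).Group :=
  (affA k).simple ⟨j % (k + 1), Nat.mod_lt j (Nat.succ_pos k)⟩

/-- The ascending product `s_a s_{a+1} ⋯ s_b`. -/
def ascend (k a b : ℕ) : (affA k).Group :=
  (((List.range (b + 1 - a)).map fun r => snat k (a + r)).prod)

/-- The descending product `s_b s_{b-1} ⋯ s_a`. -/
def descend (k a b : ℕ) : (affA k).Group :=
  (((List.range (b + 1 - a)).map fun r => snat k (b - r)).prod)

/-- The reflection `s_θ = s₁⋯s_{k-1} s_k s_{k-1}⋯s₁` in the highest root of the finite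
part (rank `k`). -/
def sTheta (k : ℕ) : (affA k).Group :=
  ascend k 1 (k - 1) * snat k k * descend k 1 (k - 1)

/-- The translation `t_{θ∨} = s₀ s_θ`. -/
def tTheta (k : ℕ) : (affA k).Group := snat k 0 * sTheta k

/-- The translation `t_{αᵢ∨}` (1-based index `i`), via `t_{α₁∨} = w t_{θ∨} w⁻¹` with
`w = s₂⋯s_k`, and `t_{α_{i+1}∨} = (sᵢ s_{i+1}) t_{αᵢ∨} (sᵢ s_{i+1})⁻¹`. -/
def tCoroot (k : ℕ) : ℕ → (affA k).Group
  | 0 => 1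
  | 1 => ascend k 2 k * tTheta k * (ascend k 2 k)⁻¹
  | (i + 2) =>
      (snat k (i + 1) * snat k (i + 2)) * tCoroot k (i + 1) *
        (snat k (i + 1) * snat k (i + 2))⁻¹

section AuxLemmas

open CoxeterMatrix List

-- basic simple-reflection lemmas for affA
lemma affA_simple_sq (k : ℕ) (i : Fin (k+1)) :
    (affA k).simple i * (affA k).simple i = 1 :=
  (affA k).toCoxeterSystem.simple_mul_simple_self i

lemma affA_simple_inv (k : ℕ) (i : Fin (k+1)) :
    ((affA k).simple i)⁻¹ = (affA k).simple i :=
  (affA k).toCoxeterSystem.inv_simple i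

lemma affA_comm (k : ℕ) (i j : Fin (k+1)) (h : (affA k).M i j = 2) :
    (affA k).simple i * (affA k).simple j = (affA k).simple j * (affA k).simple i := by
  have hp := (affA k).toCoxeterSystem.simple_mul_simple_pow i j
  rw [CoxeterMatrix.toCoxeterSystem_simple, h] at hp
  have h2 : ((affA k).simple i * (affA k).simple j) * ((affA k).simple i * (affA k).simple j) = 1 := by
    rw [← pow_two]; exact hp
  have := eq_inv_of_mul_eq_one_left h2
  rw [mul_inv_rev, affA_simple_inv, affA_simple_inv] at this
  exact this

lemma affA_braid (k : ℕ) (i j : Fin (k+1)) (h : (affA k).M i j = 3) :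
    (affA k).simple i * (affA k).simple j * (affA k).simple i =
      (affA k).simple j * (affA k).simple i * (affA k).simple j := by
  have hp := (affA k).toCoxeterSystem.simple_mul_simple_pow i j
  rw [CoxeterMatrix.toCoxeterSystem_simple, h] at hp
  have h3 : ((affA k).simple i * (affA k).simple j * (affA k).simple i) *
      ((affA k).simple j * (affA k).simple i * (affA k).simple j) = 1 := by
    have e : ((affA k).simple i * (affA k).simple j)^3 =
        ((affA k).simple i * (affA k).simple j * (affA k).simple i) *
        ((affA k).simple j * (affA k).simple i * (affA k).simple j) := by
      rw [pow_succ, pow_succ, pow_one]; simp only [mul_assoc]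
    rw [← e]; exact hp
  have h4 := eq_inv_of_mul_eq_one_left h3
  simp only [mul_inv_rev, affA_simple_inv] at h4
  rw [h4, ← mul_assoc]

-- snat versions
lemma snat_eq (k j : ℕ) (h : j < k + 1) : snat k j = (affA k).simple ⟨j, h⟩ := by
  unfold snat; congr 1; exact Fin.ext (Nat.mod_eq_of_lt h)

lemma snat_sq (k j : ℕ) : snat k j * snat k j = 1 := affA_simple_sq k _

lemma snat_inv (k j : ℕ) : (snat k j)⁻¹ = snat k j := affA_simple_inv k _

lemma snat_cancel (k j : ℕ) (x : (affA k).Group) : snat k j * (snat k j * x) = x := by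
  rw [← mul_assoc, snat_sq, one_mul]

lemma affA_M_eq_two (k a b : ℕ) (ha : a < k+1) (hb : b < k+1) (hab : a ≠ b)
    (h1 : (a+1) % (k+1) ≠ b) (h2 : (b+1) % (k+1) ≠ a) :
    (affA k).M ⟨a, ha⟩ ⟨b, hb⟩ = 2 := by
  show Matrix.of _ _ _ = 2
  rw [Matrix.of_apply]
  simp only [Fin.mk.injEq]
  rw [if_neg hab, if_neg]
  push_neg
  exact ⟨h1, h2⟩

lemma snat_comm (k a b : ℕ) (ha : a < k+1) (hb : b < k+1) (hab : a ≠ b)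
    (h1 : (a+1) % (k+1) ≠ b) (h2 : (b+1) % (k+1) ≠ a) :
    Commute (snat k a) (snat k b) := by
  rw [snat_eq k a ha, snat_eq k b hb]
  exact affA_comm k _ _ (affA_M_eq_two k a b ha hb hab h1 h2)

lemma affA_M_eq_three (k a b : ℕ) (ha : a < k+1) (hb : b < k+1) (hab : a ≠ b)
    (h1 : (a+1) % (k+1) = b) :
    (affA k).M ⟨a, ha⟩ ⟨b, hb⟩ = 3 := by
  show Matrix.of _ _ _ = 3
  rw [Matrix.of_apply]
  simp only [Fin.mk.injEq]
  rw [if_neg hab, if_pos (Or.inl h1)]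

lemma snat_braid (k a : ℕ) (ha : a + 1 < k + 1) :
    snat k a * snat k (a+1) * snat k a = snat k (a+1) * snat k a * snat k (a+1) := by
  rw [snat_eq k a (by omega), snat_eq k (a+1) ha]
  exact affA_braid k _ _ (affA_M_eq_three k a (a+1) (by omega) ha (by omega)
    (Nat.mod_eq_of_lt ha))

-- commuting with ascend / descend
lemma commute_ascend (k c a b : ℕ)
    (H : ∀ j, a ≤ j → j ≤ b → Commute (snat k c) (snat k j)) :
    Commute (snat k c) (ascend k a b) := by
  unfold ascend
  apply Commute.list_prod_right
  intro x hx
  simp only [List.mem_map, List.mem_range] at hx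
  obtain ⟨r, hr, rfl⟩ := hx
  exact H (a + r) (by omega) (by omega)

lemma commute_descend (k c a b : ℕ) (hab : a ≤ b)
    (H : ∀ j, a ≤ j → j ≤ b → Commute (snat k c) (snat k j)) :
    Commute (snat k c) (descend k a b) := by
  unfold descend
  apply Commute.list_prod_right
  intro x hx
  simp only [List.mem_map, List.mem_range] at hx
  obtain ⟨r, hr, rfl⟩ := hx
  exact H (b - r) (by omega) (by omega)

-- splitting lemmas
lemma ascend_succ (k a b : ℕ) (h : a ≤ b + 1) :
    ascend k a (b+1) = ascend k a b * snat k (b+1) := by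
  unfold ascend
  rw [show b + 1 + 1 - a = (b + 1 - a) + 1 by omega, List.range_succ, List.map_append,
    List.prod_append]
  simp only [List.map_cons, List.map_nil, List.prod_cons, List.prod_nil, mul_one]
  congr 2
  omega

lemma descend_succ (k a b : ℕ) (h : a ≤ b + 1) :
    descend k a (b+1) = snat k (b+1) * descend k a b := by
  unfold descend
  rw [show b + 1 + 1 - a = (b + 1 - a) + 1 by omega, List.range_succ_eq_map]
  simp only [List.map_cons, List.prod_cons, List.map_map, Nat.sub_zero]
  congr 1
  have : ((fun r => snat k (b + 1 - r)) ∘ Nat.succ) = fun r => snat k (b - r) := by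
    funext r; simp [Function.comp, Nat.succ_sub_succ]
  rw [this]

end AuxLemmas

section OmegaLemmas

variable {m : ℕ} (ω : (affA m).Group →* (affA (m + 1)).Group)

lemma hom_snat (hω : ∀ i : Fin (m + 1), i ≠ 0 →
      ω ((affA m).simple i) = (affA (m + 1)).simple (Fin.castSucc i))
    (j : ℕ) (h1 : 1 ≤ j) (h2 : j ≤ m) : ω (snat m j) = snat (m+1) j := by
  rw [snat_eq m j (by omega), hω ⟨j, by omega⟩ (by simp [Fin.ext_iff]; omega),
    snat_eq (m+1) j (by omega)]
  rfl

lemma hom_snat0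
    (hω0 : ω ((affA m).simple 0) =
      (affA (m + 1)).simple (Fin.last (m + 1)) * (affA (m + 1)).simple 0 *
        (affA (m + 1)).simple (Fin.last (m + 1))) :
    ω (snat m 0) = snat (m+1) (m+1) * snat (m+1) 0 * snat (m+1) (m+1) := by
  rw [snat_eq m 0 (by omega), snat_eq (m+1) (m+1) (by omega), snat_eq (m+1) 0 (by omega)]
  have e0 : (⟨0, by omega⟩ : Fin (m+1)) = 0 := rfl
  have e0' : (⟨0, by omega⟩ : Fin (m+2)) = 0 := rfl
  have el : (⟨m+1, by omega⟩ : Fin (m+2)) = Fin.last (m+1) := rfl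
  rw [e0, e0', el, hω0]

lemma hom_ascend (hω : ∀ i : Fin (m + 1), i ≠ 0 →
      ω ((affA m).simple i) = (affA (m + 1)).simple (Fin.castSucc i))
    (a b : ℕ) (ha : 1 ≤ a) (hb : b ≤ m) : ω (ascend m a b) = ascend (m+1) a b := by
  unfold ascend
  rw [map_list_prod, List.map_map]
  congr 1
  apply List.map_congr_left
  intro r hr
  simp only [List.mem_range] at hr
  exact hom_snat ω hω (a + r) (by omega) (by omega)

lemma hom_descend (hω : ∀ i : Fin (m + 1), i ≠ 0 →
      ω ((affA m).simple i) = (affA (m + 1)).simple (Fin.castSucc i))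
    (a b : ℕ) (ha : 1 ≤ a) (hb : b ≤ m) : ω (descend m a b) = descend (m+1) a b := by
  unfold descend
  rw [map_list_prod, List.map_map]
  congr 1
  apply List.map_congr_left
  intro r hr
  simp only [List.mem_range] at hr
  by_cases hab : a ≤ b
  · exact hom_snat ω hω (b - r) (by omega) (by omega)
  · omega

end OmegaLemmas

section MainProof

lemma key_identity (m p : ℕ) (hm : 2 ≤ m) (hp : p + 1 = m) (x : (affA (m+1)).Group) :
    snat (m+1) (m+1) * (ascend (m+1) 1 p * (snat (m+1) m * (descend (m+1) 1 p * x)))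
    = ascend (m+1) 1 p * (snat (m+1) m * (snat (m+1) (m+1) * (snat (m+1) m *
        (descend (m+1) 1 p * (snat (m+1) (m+1) * x))))) := by
  set c := snat (m+1) (m+1) with hc
  set sm := snat (m+1) m with hsmdef
  set P := ascend (m+1) 1 p with hPdef
  set Q := descend (m+1) 1 p with hQdef
  have hcomm : ∀ j, 1 ≤ j → j ≤ p → Commute c (snat (m+1) j) := by
    intro j h1 h2
    apply snat_comm (m+1) (m+1) j (by omega) (by omega) (by omega)
    · rw [Nat.mod_self]; omega
    · rw [Nat.mod_eq_of_lt (by omega)]; omega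
  have hP : Commute c P := commute_ascend (m+1) (m+1) 1 p (fun j h1 h2 => hcomm j h1 h2)
  have hQ : Commute c Q := commute_descend (m+1) (m+1) 1 p (by omega)
    (fun j h1 h2 => hcomm j h1 h2)
  have hbr : sm * c * sm = c * sm * c := snat_braid (m+1) m (by omega)
  have hQ' : ∀ y, Q * (c * y) = c * (Q * y) := fun y => by
    rw [← mul_assoc, ← hQ.eq, mul_assoc]
  have hP' : ∀ y, P * (c * y) = c * (P * y) := fun y => by
    rw [← mul_assoc, ← hP.eq, mul_assoc]
  have hbr' : ∀ y, sm * (c * (sm * (c * y))) = c * (sm * y) := by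
    intro y
    calc sm * (c * (sm * (c * y))) = (sm * c * sm) * (c * y) := by simp only [mul_assoc]
      _ = (c * sm * c) * (c * y) := by rw [hbr]
      _ = c * (sm * (c * (c * y))) := by simp only [mul_assoc]
      _ = c * (sm * y) := by rw [snat_cancel]
  rw [hQ' x, hbr' (Q * x), hP']

lemma base_case (m : ℕ) (hm : 2 ≤ m)
    (ω : (affA m).Group →* (affA (m + 1)).Group)
    (hω : ∀ i : Fin (m + 1), i ≠ 0 →
      ω ((affA m).simple i) = (affA (m + 1)).simple (Fin.castSucc i))
    (hω0 : ω ((affA m).simple 0) =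
      (affA (m + 1)).simple (Fin.last (m + 1)) * (affA (m + 1)).simple 0 *
        (affA (m + 1)).simple (Fin.last (m + 1))) :
    ω (tCoroot m 1) = tCoroot (m+1) 1 := by
  obtain ⟨n, rfl⟩ : ∃ n, m = n + 1 := ⟨m - 1, by omega⟩
  show ω (ascend (n+1) 2 (n+1) * tTheta (n+1) * (ascend (n+1) 2 (n+1))⁻¹)
      = ascend (n+1+1) 2 (n+1+1) * tTheta (n+1+1) * (ascend (n+1+1) 2 (n+1+1))⁻¹
  unfold tTheta sTheta
  simp only [map_mul, map_inv, Nat.add_sub_cancel]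
  rw [hom_ascend ω hω 2 (n+1) (by omega) le_rfl,
    hom_snat0 ω hω0,
    hom_ascend ω hω 1 n (by omega) (by omega),
    hom_snat ω hω (n+1) (by omega) le_rfl,
    hom_descend ω hω 1 n (by omega) (by omega),
    ascend_succ (n+1+1) 2 (n+1) (by omega),
    ascend_succ (n+1+1) 1 n (by omega),
    descend_succ (n+1+1) 1 n (by omega),
    mul_inv_rev, snat_inv]
  simp only [mul_assoc]
  rw [key_identity (n+1) n hm rfl]

theorem stmt15 (m : ℕ) (hm : 2 ≤ m)
    (ω : (affA m).Group →* (affA (m + 1)).Group)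
    (hω : ∀ i : Fin (m + 1), i ≠ 0 →
      ω ((affA m).simple i) = (affA (m + 1)).simple (Fin.castSucc i))
    (hω0 : ω ((affA m).simple 0) =
      (affA (m + 1)).simple (Fin.last (m + 1)) * (affA (m + 1)).simple 0 *
        (affA (m + 1)).simple (Fin.last (m + 1))) :
    ∀ i : ℕ, 1 ≤ i → i ≤ m → ω (tCoroot m i) = tCoroot (m + 1) i := by
  intro i
  induction i with
  | zero => omega
  | succ j ih =>
    intro _ h2
    cases j with
    | zero => exact base_case m hm ω hω hω0
    | succ j' =>
      have ihj := ih (by omega) (by omega)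
      show ω ((snat m (j'+1) * snat m (j'+2)) * tCoroot m (j'+1) *
            (snat m (j'+1) * snat m (j'+2))⁻¹)
          = (snat (m+1) (j'+1) * snat (m+1) (j'+2)) * tCoroot (m+1) (j'+1) *
            (snat (m+1) (j'+1) * snat (m+1) (j'+2))⁻¹
      rw [map_mul, map_mul, map_inv, map_mul,
        hom_snat ω hω (j'+1) (by omega) (by omega),
        hom_snat ω hω (j'+2) (by omega) (by omega), ihj]

end MainProof
end

section
/- For an element $\xi \in Q_0^\vee$ of the finite coroot lattice and a subset $J \subseteq I_0$, say $\xi$ is $J$-adjusted if $\langle\xi,\gamma\rangle \in \{0,-1\}$ for all positive roots $\gamma$ in the root subsystem $\Delta_J \cap \Delta_+$ spanned by $\{\alpha_j : j \in J\}$. Then for each $\xi \in Q_0^\vee$ there exists a unique $\varphi_J(\xi) \in \bigoplus_{j\in J}\mathbb{Z}\alpha_j^\vee$ such that $\xi + \varphi_J(\xi)$ is $J$-adjusted; in particular, $\xi$ is $J$-adjusted if and only if $\varphi_J(\xi) = 0$. -/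
/- STATEMENT 19: J-adjusted elements of the coroot lattice.
   Work with the root system of type A_{n-1} realized in ℤ^n (n coordinates): the positive
   roots are γ_{ij} = e_i - e_j (i < j), the simple roots are α_a = e_a - e_{a+1}
   (a ∈ Fin (n-1) — here indexed by `Fin n` with ambient ℤ^{n+1}); a coroot lattice element
   ξ = ∑ ξ_a α_a∨ pairs with γ_{ij} via ⟨ξ, γ_{ij}⟩ = (vec ξ)_i - (vec ξ)_j where vec ξ is
   the corresponding vector.  The positive roots of the parabolic subsystem Δ_J are the
   γ_{ij} (i < j) all of whose simple constituents α_a (i ≤ a < j) lie in J.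
   Claim: for every ξ there is a unique φ_J(ξ) supported on J with ξ + φ_J(ξ) J-adjusted,
   i.e. ⟨ξ + φ_J(ξ), γ⟩ ∈ {0, -1} for all γ ∈ Δ_J ∩ Δ_+; in particular ξ is J-adjusted iff
   φ_J(ξ) = 0. -/

/-- The vector in `ℤ^{n+1}` corresponding to the coroot-lattice element `∑ ξ_a α_a∨`
(type A_n, simple coroots `α_a∨ = e_a - e_{a+1}`). -/
def corootVec (n : ℕ) (ξ : Fin n → ℤ) : Fin (n + 1) → ℤ := fun i =>
  (if h : (i : ℕ) < n then ξ ⟨i, h⟩ else 0) -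
    (if h : 0 < (i : ℕ) then ξ ⟨(i : ℕ) - 1, by omega⟩ else 0)

namespace S19

variable (n : ℕ) (J : Finset (Fin n))

def K : Finset ℕ := J.map Fin.valEmbedding

lemma mem_K_iff {b : Fin n} : (b : ℕ) ∈ K n J ↔ b ∈ J := by
  simp only [K, Finset.mem_map, Fin.valEmbedding_apply]
  constructor
  · rintro ⟨c, hc, h⟩; rwa [Fin.val_injective h] at hc
  · exact fun h => ⟨b, h, rfl⟩

lemma mem_K_lt {b : ℕ} (h : b ∈ K n J) : b < n := by
  simp only [K, Finset.mem_map] at h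
  obtain ⟨c, _, rfl⟩ := h
  exact c.isLt

lemma not_mem_K {b : ℕ} (h : n ≤ b) : b ∉ K n J :=
  fun hb => absurd (mem_K_lt n J hb) (by omega)

lemma strt_ex (a : ℕ) : ∃ s, Finset.Icc s a ⊆ K n J :=
  ⟨a + 1, fun c hc => absurd (Finset.mem_Icc.1 hc) (by omega)⟩

lemma nxt_ex (a : ℕ) : ∃ b, a ≤ b ∧ b ∉ K n J :=
  ⟨a + n, by omega, not_mem_K n J (by omega)⟩

def strt (a : ℕ) : ℕ := Nat.find (strt_ex n J a)

def nxt (a : ℕ) : ℕ := Nat.find (nxt_ex n J a)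

lemma strt_subset (a : ℕ) : Finset.Icc (strt n J a) a ⊆ K n J := Nat.find_spec (strt_ex n J a)

lemma strt_min {a s : ℕ} (h : Finset.Icc s a ⊆ K n J) : strt n J a ≤ s := Nat.find_min' _ h

lemma strt_le {a : ℕ} (ha : a ∈ K n J) : strt n J a ≤ a := by
  refine strt_min n J (fun c hc => ?_)
  rw [Finset.mem_Icc] at hc
  obtain rfl : c = a := by omega
  exact ha

lemma strt_pred {a : ℕ} (ha : a ∈ K n J) (h0 : 0 < strt n J a) :
    strt n J a - 1 ∉ K n J := by
  intro hmem
  have hmin := Nat.find_min (strt_ex n J a) (show strt n J a - 1 < strt n J a by omega)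
  apply hmin
  intro c hc
  rw [Finset.mem_Icc] at hc
  rcases Nat.eq_or_lt_of_le hc.1 with h | h
  · rwa [← h]
  · exact strt_subset n J a (Finset.mem_Icc.2 ⟨by omega, hc.2⟩)

lemma nxt_spec (a : ℕ) : a ≤ nxt n J a ∧ nxt n J a ∉ K n J := Nat.find_spec (nxt_ex n J a)

lemma nxt_min {a b : ℕ} (h1 : a ≤ b) (h2 : b ∉ K n J) : nxt n J a ≤ b :=
  Nat.find_min' _ ⟨h1, h2⟩

lemma nxt_mem {a b : ℕ} (h1 : a ≤ b) (h2 : b < nxt n J a) : b ∈ K n J := by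
  by_contra hb
  exact absurd (nxt_min n J h1 hb) (by omega)

lemma nxt_gt {a : ℕ} (ha : a ∈ K n J) : a < nxt n J a := by
  rcases Nat.eq_or_lt_of_le (nxt_spec n J a).1 with h | h
  · exact absurd ha (h ▸ (nxt_spec n J a).2)
  · exact h

lemma nxt_le_n {a : ℕ} (ha : a < n) : nxt n J a ≤ n :=
  nxt_min n J (by omega) (not_mem_K n J le_rfl)

lemma run_mem {a c : ℕ} (ha : a ∈ K n J) (h1 : strt n J a ≤ c) (h2 : c < nxt n J a) :
    c ∈ K n J := by
  rcases le_total c a with h | h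
  · exact strt_subset n J a (Finset.mem_Icc.2 ⟨h1, h⟩)
  · exact nxt_mem n J h h2

lemma run_eq {a c : ℕ} (ha : a ∈ K n J) (h1 : strt n J a ≤ c) (h2 : c < nxt n J a) :
    strt n J c = strt n J a ∧ nxt n J c = nxt n J a := by
  have hsa := strt_le n J ha
  have hna := nxt_gt n J ha
  have hcK : c ∈ K n J := run_mem n J ha h1 h2
  constructor
  · apply le_antisymm
    · apply strt_min
      intro b hb
      rw [Finset.mem_Icc] at hb
      exact run_mem n J ha hb.1 (by omega)
    · apply strt_min
      intro b hb
      rw [Finset.mem_Icc] at hb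
      rcases le_total b c with h | h
      · exact strt_subset n J c (Finset.mem_Icc.2 ⟨hb.1, h⟩)
      · exact run_mem n J ha (by omega) (by omega)
  · apply le_antisymm
    · exact nxt_min n J (by omega) (nxt_spec n J a).2
    · have hc : a ≤ nxt n J c := by
        by_contra h
        push_neg at h
        exact (nxt_spec n J c).2 (strt_subset n J a (Finset.mem_Icc.2
          ⟨le_trans h1 (nxt_spec n J c).1, by omega⟩))
      exact nxt_min n J hc (nxt_spec n J c).2

variable (ξ : Fin n → ℤ)

def x : ℕ → ℤ := fun a => if h : a < n then ξ ⟨a, h⟩ else 0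

def AA (s : ℕ) : ℤ := if s = 0 then 0 else x n ξ (s - 1)

def SS (s e : ℕ) : ℤ := x n ξ e - AA n ξ s

def LL (s e : ℕ) : ℤ := (e : ℤ) + 1 - (s : ℤ)

def mm (s e : ℕ) : ℤ := SS n ξ s e / LL s e

def rr (s e : ℕ) : ℤ := SS n ξ s e % LL s e

def ff (s e : ℕ) (k : ℤ) : ℤ :=
  AA n ξ s + k * mm n ξ s e + max 0 (k - (LL s e - rr n ξ s e))

def eta (a : ℕ) : ℤ :=
  if a ∈ K n J then ff n ξ (strt n J a) (nxt n J a) ((a : ℤ) - (strt n J a : ℤ) + 1)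
  else x n ξ a

def HH (p : ℕ) : ℤ := if p = 0 then 0 else eta n J ξ (p - 1)

lemma step (s e : ℕ) (k : ℤ) :
    ff n ξ s e (k + 1) - ff n ξ s e k =
      if k < LL s e - rr n ξ s e then mm n ξ s e else mm n ξ s e + 1 := by
  unfold ff
  split_ifs with h
  · rw [max_eq_left (by omega), max_eq_left (by omega)]
    ring
  · rw [max_eq_right (by omega), max_eq_right (by omega)]
    ring

lemma pair (s e : ℕ) (k1 k2 : ℤ) (h : k1 < k2) :
    (ff n ξ s e (k1 + 1) - ff n ξ s e k1) - (ff n ξ s e (k2 + 1) - ff n ξ s e k2) = 0 ∨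
    (ff n ξ s e (k1 + 1) - ff n ξ s e k1) - (ff n ξ s e (k2 + 1) - ff n ξ s e k2) = -1 := by
  rw [step, step]
  split_ifs <;> omega

lemma rr_bound {s e : ℕ} (h : s ≤ e) : 0 ≤ rr n ξ s e ∧ rr n ξ s e < LL s e := by
  have hL : 0 < LL s e := by unfold LL; omega
  exact ⟨Int.emod_nonneg _ (by omega), Int.emod_lt_of_pos _ hL⟩

lemma ff_zero {s e : ℕ} (h : s ≤ e) : ff n ξ s e 0 = AA n ξ s := by
  have := rr_bound n ξ h
  unfold ff
  rw [max_eq_left (by omega)]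
  ring

lemma ff_last {s e : ℕ} (h : s ≤ e) : ff n ξ s e (LL s e) = x n ξ e := by
  have := rr_bound n ξ h
  unfold ff
  rw [max_eq_right (by omega)]
  have hdm : LL s e * (SS n ξ s e / LL s e) + SS n ξ s e % LL s e = SS n ξ s e :=
    Int.mul_ediv_add_emod _ _
  unfold mm rr SS
  unfold SS at hdm
  linarith [hdm]

lemma H_run {a : ℕ} (ha : a ∈ K n J) {p : ℕ} (hp1 : strt n J a ≤ p)
    (hp2 : p ≤ nxt n J a + 1) :
    HH n J ξ p = ff n ξ (strt n J a) (nxt n J a) ((p : ℤ) - (strt n J a : ℤ)) := by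
  have hsa := strt_le n J ha
  have hna := nxt_gt n J ha
  set s := strt n J a with hs
  set e := nxt n J a with he
  have hse : s ≤ e := by omega
  rcases Nat.eq_or_lt_of_le hp1 with h | h
  · -- p = s
    rw [← h]
    have : ((s : ℤ) - (s : ℤ)) = 0 := by ring
    rw [this, ff_zero n ξ hse]
    unfold HH
    split_ifs with h0
    · unfold AA
      rw [if_pos h0]
    · have hs0 : s ≠ 0 := h0
      have hsp : s - 1 ∉ K n J := strt_pred n J ha (by omega)
      unfold AA eta
      rw [if_neg hs0, if_neg hsp]
  · rcases Nat.eq_or_lt_of_le hp2 with h2 | h2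
    · -- p = e + 1
      rw [h2]
      have hee : e ∉ K n J := (nxt_spec n J a).2
      have : ((e : ℤ) + 1 - (s : ℤ)) = LL s e := by unfold LL; ring
      rw [show (((e+1 : ℕ) : ℤ) - (s : ℤ)) = LL s e by unfold LL; push_cast; ring,
        ff_last n ξ hse]
      unfold HH eta
      rw [if_neg (by omega : ¬ (e + 1 = 0))]
      simp only [Nat.add_sub_cancel]
      rw [if_neg hee]
    · -- s < p ≤ e, use eta (p-1) with run_eq
      have hrun := run_eq n J ha (show s ≤ p - 1 by omega) (show p - 1 < e by omega)
      have hm : p - 1 ∈ K n J := run_mem n J ha (by omega) (by omega)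
      unfold HH eta
      rw [if_neg (by omega : ¬ p = 0), if_pos hm, hrun.1, hrun.2, ← hs, ← he]
      congr 1
      push_cast [show 1 ≤ p by omega]
      ring

lemma cmp_aux {s e : ℕ} (D D' : ℕ → ℤ)
    (hD : ∀ i j, s ≤ i → i < j → j ≤ e → D i - D j = 0 ∨ D i - D j = -1)
    (hD' : ∀ i j, s ≤ i → i < j → j ≤ e → D' i - D' j = 0 ∨ D' i - D' j = -1)
    {q : ℕ} (hq : q ∈ Finset.Icc s e) (hlt : D q < D' q) :
    ∑ p ∈ Finset.Icc s e, D p < ∑ p ∈ Finset.Icc s e, D' p := by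
  rw [Finset.mem_Icc] at hq
  apply Finset.sum_lt_sum
  · intro p hp
    rw [Finset.mem_Icc] at hp
    rcases lt_trichotomy p q with h | h | h
    · have h1 := hD p q hp.1 h hq.2
      have h2 := hD' p q hp.1 h hq.2
      omega
    · exact h ▸ hlt.le
    · have h1 := hD q p hq.1 h hp.2
      have h2 := hD' q p hq.1 h hp.2
      omega
  · exact ⟨q, Finset.mem_Icc.2 hq, hlt⟩

lemma cmp {s e : ℕ} (D D' : ℕ → ℤ)
    (hD : ∀ i j, s ≤ i → i < j → j ≤ e → D i - D j = 0 ∨ D i - D j = -1)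
    (hD' : ∀ i j, s ≤ i → i < j → j ≤ e → D' i - D' j = 0 ∨ D' i - D' j = -1)
    (hsum : ∑ p ∈ Finset.Icc s e, D p = ∑ p ∈ Finset.Icc s e, D' p)
    (q : ℕ) (hq : q ∈ Finset.Icc s e) : D q = D' q := by
  rcases lt_trichotomy (D q) (D' q) with h | h | h
  · exact absurd hsum (ne_of_lt (cmp_aux D D' hD hD' hq h))
  · exact h
  · exact absurd hsum.symm (ne_of_lt (cmp_aux D' D hD' hD hq h))

lemma tele (F : ℕ → ℤ) (s e : ℕ) (h : s ≤ e) :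
    ∑ p ∈ Finset.Icc s e, (F (p + 1) - F p) = F (e + 1) - F s := by
  induction e, h using Nat.le_induction with
  | base => simp
  | succ e he ih =>
    rw [Finset.sum_Icc_succ_top (by omega), ih]
    ring

lemma eta_out {a : ℕ} (h : a ∉ K n J) : eta n J ξ a = x n ξ a := if_neg h

lemma eta_zero {a : ℕ} (h : n ≤ a) : eta n J ξ a = 0 := by
  rw [eta_out n J ξ (not_mem_K n J h)]
  unfold x
  rw [dif_neg (by omega)]

lemma D_pair {a : ℕ} (ha : a ∈ K n J) {i j : ℕ} (hi : strt n J a ≤ i) (hij : i < j)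
    (hj : j ≤ nxt n J a) :
    (HH n J ξ (i + 1) - HH n J ξ i) - (HH n J ξ (j + 1) - HH n J ξ j) = 0 ∨
    (HH n J ξ (i + 1) - HH n J ξ i) - (HH n J ξ (j + 1) - HH n J ξ j) = -1 := by
  rw [H_run n J ξ ha (p := i) hi (by omega),
      H_run n J ξ ha (p := i + 1) (by omega) (by omega),
      H_run n J ξ ha (p := j) (by omega) (by omega),
      H_run n J ξ ha (p := j + 1) (by omega) (by omega)]
  have e1 : ((i + 1 : ℕ) : ℤ) - (strt n J a : ℤ) = ((i : ℕ) : ℤ) - (strt n J a : ℤ) + 1 := by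
    push_cast; ring
  have e2 : ((j + 1 : ℕ) : ℤ) - (strt n J a : ℤ) = ((j : ℕ) : ℤ) - (strt n J a : ℤ) + 1 := by
    push_cast; ring
  rw [e1, e2]
  refine pair n ξ _ _ _ _ ?_
  have : (i : ℤ) < (j : ℤ) := by exact_mod_cast hij
  omega

lemma coro_eq (ζ : Fin n → ℤ) (Y : ℕ → ℤ) (HY : ℕ → ℤ)
    (hY : ∀ (a : ℕ) (h : a < n), Y a = ζ ⟨a, h⟩) (hY0 : ∀ a, n ≤ a → Y a = 0)
    (hHY : ∀ p, HY p = if p = 0 then 0 else Y (p - 1)) (i : Fin (n + 1)) :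
    corootVec n ζ i = HY ((i : ℕ) + 1) - HY (i : ℕ) := by
  have hin : (i : ℕ) ≤ n := by omega
  rw [hHY, hHY, if_neg (by omega : ¬ (i : ℕ) + 1 = 0)]
  simp only [Nat.add_sub_cancel]
  unfold corootVec
  congr 1
  · split_ifs with h
    · exact (hY _ h).symm
    · exact (hY0 _ (by omega)).symm
  · by_cases h0 : (i : ℕ) = 0
    · rw [if_pos h0, dif_neg (by omega)]
    · rw [if_neg h0, dif_pos (by omega : 0 < (i : ℕ))]
      exact (hY _ (by omega)).symm

lemma HH_succ (p : ℕ) : HH n J ξ (p + 1) = eta n J ξ p := by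
  unfold HH
  simp

def phi : Fin n → ℤ := fun a => eta n J ξ (a : ℕ) - ξ a

end S19


open S19 in
theorem stmt19 (n : ℕ) (J : Finset (Fin n)) (ξ : Fin n → ℤ) :
    ∃! φ : Fin n → ℤ,
      (∀ a, a ∉ J → φ a = 0) ∧
      ∀ i j : Fin (n + 1), i < j →
        (∀ a : Fin n, (i : ℕ) ≤ (a : ℕ) → (a : ℕ) < (j : ℕ) → a ∈ J) →
        (corootVec n (ξ + φ) i - corootVec n (ξ + φ) j = 0 ∨
          corootVec n (ξ + φ) i - corootVec n (ξ + φ) j = -1) := by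
  have hcoro : ∀ i : Fin (n + 1),
      corootVec n (ξ + phi n J ξ) i = HH n J ξ ((i : ℕ) + 1) - HH n J ξ (i : ℕ) := by
    intro i
    refine coro_eq n (ξ + phi n J ξ) (eta n J ξ) (HH n J ξ) ?_ ?_ (fun p => rfl) i
    · intro a h
      simp only [Pi.add_apply, phi, Fin.eta]
      ring
    · intro a h
      exact eta_zero n J ξ h
  refine ⟨phi n J ξ, ⟨?_, ?_⟩, ?_⟩
  · -- support
    intro a ha
    have haK : (a : ℕ) ∉ K n J := fun h => ha ((mem_K_iff n J).1 h)
    simp only [phi]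
    rw [eta_out n J ξ haK]
    unfold x
    rw [dif_pos a.isLt]
    simp
  · -- adjustedness
    intro i j hij hall
    have hij' : (i : ℕ) < (j : ℕ) := hij
    have hjn : (j : ℕ) ≤ n := by omega
    have hKint : ∀ b : ℕ, (i : ℕ) ≤ b → b < (j : ℕ) → b ∈ K n J := by
      intro b h1 h2
      have hb : b < n := by omega
      exact (mem_K_iff n J (b := ⟨b, hb⟩)).2 (hall ⟨b, hb⟩ h1 h2)
    have hiK : (i : ℕ) ∈ K n J := hKint i le_rfl hij'
    have hje : (j : ℕ) ≤ nxt n J i := by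
      by_contra h
      push_neg at h
      exact (nxt_spec n J (i : ℕ)).2 (hKint _ (nxt_spec n J (i : ℕ)).1 h)
    rw [hcoro i, hcoro j]
    exact D_pair n J ξ hiK (strt_le n J hiK) hij' hje
  · -- uniqueness
    rintro φ' ⟨hs', hc'⟩
    obtain ⟨Y, hY1, hY0⟩ : ∃ Y : ℕ → ℤ,
        (∀ (a : ℕ) (h : a < n), Y a = ξ ⟨a, h⟩ + φ' ⟨a, h⟩) ∧ (∀ a, n ≤ a → Y a = 0) :=
      ⟨fun b => if h : b < n then ξ ⟨b, h⟩ + φ' ⟨b, h⟩ else 0,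
        fun a h => dif_pos h, fun a h => dif_neg (by omega)⟩
    obtain ⟨HY, hHY⟩ : ∃ HY : ℕ → ℤ, ∀ p, HY p = if p = 0 then 0 else Y (p - 1) :=
      ⟨_, fun p => rfl⟩
    have hYcoro : ∀ i : Fin (n + 1),
        corootVec n (ξ + φ') i = HY ((i : ℕ) + 1) - HY (i : ℕ) :=
      fun i => coro_eq n (ξ + φ') Y HY (fun a h => hY1 a h) hY0 hHY i
    have hout : ∀ b : ℕ, b ∉ K n J → Y b = eta n J ξ b := by
      intro b hb
      rw [eta_out n J ξ hb]
      by_cases h : b < n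
      · rw [hY1 b h]
        have hbJ : (⟨b, h⟩ : Fin n) ∉ J := fun hj => hb ((mem_K_iff n J).2 hj)
        rw [hs' _ hbJ]
        unfold x
        rw [dif_pos h]
        ring
      · rw [hY0 b (by omega)]
        unfold x
        rw [dif_neg h]
    have hmain : ∀ b : ℕ, Y b = eta n J ξ b := by
      intro b
      by_cases hbK : b ∈ K n J
      swap
      · exact hout b hbK
      have hbn : b < n := mem_K_lt n J hbK
      have hsb := strt_le n J hbK
      have hnb := nxt_gt n J hbK
      have hnn := nxt_le_n n J hbn
      set s := strt n J b with hsdef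
      set e := nxt n J b with hedef
      have hD' : ∀ i j, s ≤ i → i < j → j ≤ e →
          (HY (i + 1) - HY i) - (HY (j + 1) - HY j) = 0 ∨
          (HY (i + 1) - HY i) - (HY (j + 1) - HY j) = -1 := by
        intro i j h1 h2 h3
        have h4 : j ≤ n := le_trans h3 hnn
        have hint : ∀ a : Fin n, i ≤ (a : ℕ) → (a : ℕ) < j → a ∈ J := by
          intro c hci hcj
          exact (mem_K_iff n J).1 (run_mem n J hbK (by omega) (by omega))
        have hthis := hc' ⟨i, by omega⟩ ⟨j, by omega⟩ (Fin.mk_lt_mk.2 h2) hint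
        rw [hYcoro, hYcoro] at hthis
        simpa using hthis
      have hD : ∀ i j, s ≤ i → i < j → j ≤ e →
          (HH n J ξ (i + 1) - HH n J ξ i) - (HH n J ξ (j + 1) - HH n J ξ j) = 0 ∨
          (HH n J ξ (i + 1) - HH n J ξ i) - (HH n J ξ (j + 1) - HH n J ξ j) = -1 :=
        fun i j h1 h2 h3 => D_pair n J ξ hbK h1 h2 h3
      have hb1 : HH n J ξ (e + 1) = HY (e + 1) := by
        rw [HH_succ, hHY, if_neg (by omega), Nat.add_sub_cancel]
        exact (hout e (nxt_spec n J b).2).symm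
      have hb0 : HH n J ξ s = HY s := by
        rcases Nat.eq_zero_or_pos s with h | h
        · rw [h, hHY, if_pos rfl]
          unfold HH
          rw [if_pos rfl]
        · rw [hHY, if_neg (by omega)]
          rw [show HH n J ξ s = eta n J ξ (s - 1) by unfold HH; rw [if_neg (by omega)]]
          exact (hout (s - 1) (strt_pred n J hbK h)).symm
      have hsum : ∑ p ∈ Finset.Icc s e, (HH n J ξ (p + 1) - HH n J ξ p) =
          ∑ p ∈ Finset.Icc s e, (HY (p + 1) - HY p) := by
        rw [tele _ _ _ (by omega), tele _ _ _ (by omega), hb1, hb0]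
      have hcmp := cmp (fun p => HH n J ξ (p + 1) - HH n J ξ p)
        (fun p => HY (p + 1) - HY p) hD hD' hsum
      have t1 := tele HY s b (by omega)
      have t2 := tele (HH n J ξ) s b (by omega)
      have hsb2 : ∑ p ∈ Finset.Icc s b, (HH n J ξ (p + 1) - HH n J ξ p) =
          ∑ p ∈ Finset.Icc s b, (HY (p + 1) - HY p) := by
        refine Finset.sum_congr rfl (fun p hp => ?_)
        rw [Finset.mem_Icc] at hp
        exact hcmp p (Finset.mem_Icc.2 ⟨hp.1, by omega⟩)
      have e1 : HY (b + 1) = Y b := by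
        rw [hHY, if_neg (by omega), Nat.add_sub_cancel]
      have e2 : HH n J ξ (b + 1) = eta n J ξ b := HH_succ n J ξ b
      linarith [t1, t2, hsb2, hb0, e1, e2]
    funext a
    have hma := hmain (a : ℕ)
    rw [hY1 (a : ℕ) a.isLt] at hma
    simp only [Fin.eta] at hma
    simp only [phi]
    linarith [hma]
end
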